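/- arXiv:1602.00316 — 3 statements merged into one kernel-verified Lean document; each statement's English description precedes it below -/
import Mathlib

section
/- For |q| < 1, a complex, integer r ≥ 2, and nonnegative integer n: the sum over all tuples (k_1, ..., k_r) of nonnegative integers with k_1 + ... + k_r = n of [∏_{i=1}^r (a;q)_{k_i}/(q;q)_{k_i}] · ζ_r^{∑_{i=1}^r i·k_i} equals 0 if r does not divide n, and equals (a^r; q^r)_m / (q^r; q^r)_m if n = r·m. -/
open Finset Filter

noncomputable def qp (q x : ℂ) (k : ℕ) : ℂ := ∏ j ∈ Finset.range k, (1 - x * q ^ j)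

noncomputable def qpInf (q x : ℂ) : ℂ := ∏' j : ℕ, (1 - x * q ^ j)

noncomputable def qpz (q x : ℂ) (n : ℤ) : ℂ := qpInf q x / qpInf q (x * q ^ n)

noncomputable def zeta (r : ℕ) : ℂ := Complex.exp (2 * Real.pi * Complex.I / r)

open PowerSeries

section Aux

lemma qpow_ne_one {q : ℂ} (hq : ‖q‖ < 1) {k : ℕ} (hk : k ≠ 0) : q ^ k ≠ 1 := by
  intro h
  have h1 : ‖q ^ k‖ < 1 := by
    rw [norm_pow]; exact pow_lt_one₀ (norm_nonneg q) hq hk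
  rw [h] at h1; simp at h1

lemma qp_q_ne_zero {q : ℂ} (hq : ‖q‖ < 1) (k : ℕ) : qp q q k ≠ 0 := by
  unfold qp
  apply Finset.prod_ne_zero_iff.mpr
  intro j _
  have h := qpow_ne_one hq (k := j + 1) (by omega)
  intro h0
  apply h
  rw [pow_succ, mul_comm]
  linear_combination -h0

lemma qp_ratio_rec {q : ℂ} (hq : ‖q‖ < 1) (a : ℂ) (k : ℕ) :
    (qp q a (k+1) / qp q q (k+1)) * (1 - q ^ (k+1)) = (qp q a k / qp q q k) * (1 - a * q ^ k) := by
  have h1 := qp_q_ne_zero hq k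
  have h2 : (1 : ℂ) - q * q ^ k ≠ 0 := by
    intro h0
    apply qpow_ne_one hq (k := k + 1) (by omega)
    rw [pow_succ, mul_comm]
    linear_combination -h0
  rw [qp, qp, Finset.prod_range_succ, Finset.prod_range_succ, ← qp, ← qp]
  have h3 : (1:ℂ) - q ^ (k+1) = 1 - q * q ^ k := by rw [pow_succ]; ring
  rw [h3]
  rw [div_mul_eq_mul_div, div_mul_eq_mul_div, div_eq_div_iff (mul_ne_zero h1 h2) h1]
  ring

noncomputable def Fps (q a : ℂ) : PowerSeries ℂ := PowerSeries.mk fun k => qp q a k / qp q q k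

noncomputable def Kps (q a : ℂ) (r : ℕ) : PowerSeries ℂ :=
  PowerSeries.mk fun n => if r ∣ n then qp (q^r) (a^r) (n/r) / qp (q^r) (q^r) (n/r) else 0

lemma funcEq {q : ℂ} (hq : ‖q‖ < 1) (a : ℂ) :
    (1 - X) * Fps q a = (1 - C a * X) * rescale q (Fps q a) := by
  ext n
  rw [sub_mul, sub_mul, one_mul, one_mul, map_sub, map_sub]
  cases n with
  | zero =>
    simp [Fps, coeff_rescale, PowerSeries.coeff_zero_eq_constantCoeff, map_mul]
  | succ k =>
    rw [mul_assoc, coeff_succ_X_mul, coeff_C_mul, coeff_succ_X_mul,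
      coeff_rescale, coeff_rescale, Fps]
    simp only [coeff_mk]
    linear_combination qp_ratio_rec hq a k

lemma zeta_primitive {r : ℕ} (hr : 1 ≤ r) : IsPrimitiveRoot (zeta r) r := by
  have := Complex.isPrimitiveRoot_exp r (by omega)
  simpa [zeta] using this

lemma prod_one_sub_zeta_pow {r : ℕ} (hr : 1 ≤ r) (z : ℂ) :
    ∏ i ∈ Finset.range r, (1 - zeta r ^ i * z) = 1 - z ^ r := by
  have hζ := zeta_primitive hr
  have : NeZero r := ⟨by omega⟩
  rcases eq_or_ne z 0 with rfl | hz
  · simp [zero_pow (by omega : r ≠ 0)]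
  · have key : ∀ w : ℂ, ∏ i ∈ Finset.range r, (w - zeta r ^ i) = w ^ r - 1 := by
      intro w
      have h1 := Polynomial.X_pow_sub_one_eq_prod (R := ℂ) (by omega : 0 < r) hζ
      have h2 : Polynomial.nthRootsFinset r (1 : ℂ)
          = Finset.image (fun i => zeta r ^ i) (Finset.range r) := by
        ext μ
        rw [Polynomial.mem_nthRootsFinset (by omega : 0 < r) (1 : ℂ)]
        constructor
        · intro h
          obtain ⟨i, hi, hh⟩ := hζ.eq_pow_of_pow_eq_one h
          exact Finset.mem_image.mpr ⟨i, Finset.mem_range.mpr hi, hh⟩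
        · intro hmem
          obtain ⟨i, _, rfl⟩ := Finset.mem_image.mp hmem
          rw [← pow_mul, mul_comm, pow_mul, hζ.pow_eq_one, one_pow]
      have h3 := congrArg (Polynomial.eval w) h1
      rw [h2, Polynomial.eval_prod] at h3
      rw [Finset.prod_image (fun i hi j hj h =>
        hζ.pow_inj (Finset.mem_range.mp hi) (Finset.mem_range.mp hj) h)] at h3
      have h4 : w ^ r - 1 = ∏ x ∈ Finset.range r, (w - zeta r ^ x) := by simpa using h3
      exact h4.symm
    have hstep : ∏ i ∈ Finset.range r, (1 - zeta r ^ i * z)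
        = ∏ i ∈ Finset.range r, (z * (z⁻¹ - zeta r ^ i)) := by
      apply Finset.prod_congr rfl
      intro i _
      field_simp
    rw [hstep, Finset.prod_mul_distrib, Finset.prod_const, key z⁻¹, Finset.card_range]
    field_simp
    rw [div_pow, one_pow, mul_sub, mul_one_div_cancel (pow_ne_zero _ hz), mul_one]

lemma prod_ps {r : ℕ} (hr : 1 ≤ r) (b : ℂ) :
    ∏ i : Fin r, (1 - C (b * zeta r ^ (i.1+1)) * X) = 1 - C (b ^ r) * X ^ r := by
  have hζ := zeta_primitive hr
  have hpoly : ∏ i : Fin r, (1 - Polynomial.C (b * zeta r ^ (i.1+1)) * Polynomial.X)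
      = 1 - Polynomial.C (b ^ r) * Polynomial.X ^ r := by
    apply Polynomial.funext
    intro x
    simp only [Polynomial.eval_prod, Polynomial.eval_sub, Polynomial.eval_one,
      Polynomial.eval_mul, Polynomial.eval_C, Polynomial.eval_X, Polynomial.eval_pow]
    have h1 : ∏ i : Fin r, (1 - b * zeta r ^ (i.1+1) * x)
        = ∏ i ∈ Finset.range r, (1 - zeta r ^ i * (zeta r * (b * x))) := by
      rw [← Fin.prod_univ_eq_prod_range (fun i => (1 - zeta r ^ i * (zeta r * (b * x)))) r]
      apply Finset.prod_congr rfl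
      intro i _
      rw [pow_succ]
      ring
    rw [h1, prod_one_sub_zeta_pow hr, mul_pow, mul_pow, hζ.pow_eq_one, one_mul]
  have h2 := congrArg (Polynomial.coeToPowerSeries.ringHom (R := ℂ)) hpoly
  rw [map_prod] at h2
  simpa [map_sub, map_mul, map_one, map_pow, Polynomial.coeToPowerSeries.ringHom_apply,
    Polynomial.coe_C, Polynomial.coe_X, Polynomial.coe_sub, Polynomial.coe_one,
    Polynomial.coe_mul, Polynomial.coe_pow] using h2

lemma uniq {q : ℂ} (hq : ‖q‖ < 1) {b : ℂ} {r : ℕ} (hr : 1 ≤ r) (P : PowerSeries ℂ)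
    (hP : (1 - X ^ r) * P = (1 - C b * X ^ r) * rescale q P)
    (h0 : coeff 0 P = 0) : P = 0 := by
  ext n
  induction n using Nat.strong_induction_on with
  | _ n ih =>
  have ihz : ∀ m, m < n → coeff m P = 0 := fun m hm => by simpa using ih m hm
  rw [map_zero]
  rcases Nat.eq_zero_or_pos n with rfl | hn
  · exact h0
  · have hc := congrArg (coeff n) hP
    rw [sub_mul, sub_mul, one_mul, one_mul, map_sub, map_sub, coeff_X_pow_mul',
      mul_assoc, coeff_C_mul, coeff_X_pow_mul', coeff_rescale] at hc
    by_cases hrn : r ≤ n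
    · rw [if_pos hrn, if_pos hrn, ihz (n - r) (by omega), coeff_rescale,
        ihz (n - r) (by omega)] at hc
      have hq1 : q ^ n ≠ 1 := qpow_ne_one hq (by omega)
      have h2 : (1 - q ^ n) * coeff n P = 0 := by linear_combination hc
      rcases mul_eq_zero.mp h2 with h | h
      · exact absurd (by linear_combination -h) hq1
      · exact h
    · rw [if_neg hrn, if_neg hrn] at hc
      have hq1 : q ^ n ≠ 1 := qpow_ne_one hq (by omega)
      have h2 : (1 - q ^ n) * coeff n P = 0 := by linear_combination hc
      rcases mul_eq_zero.mp h2 with h | h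
      · exact absurd (by linear_combination -h) hq1
      · exact h

lemma Keq {q a : ℂ} (hq : ‖q‖ < 1) {r : ℕ} (hr : 1 ≤ r) :
    (1 - X ^ r) * Kps q a r = (1 - C (a^r) * X ^ r) * rescale q (Kps q a r) := by
  have hqr : ‖q ^ r‖ < 1 := by
    rw [norm_pow]; exact pow_lt_one₀ (norm_nonneg q) hq (by omega)
  ext n
  rw [sub_mul, sub_mul, one_mul, one_mul, map_sub, map_sub, coeff_X_pow_mul',
    mul_assoc, coeff_C_mul, coeff_X_pow_mul', coeff_rescale, coeff_rescale, Kps]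
  simp only [coeff_mk]
  by_cases hrn : r ≤ n
  · rw [if_pos hrn, if_pos hrn]
    by_cases hdvd : r ∣ n
    · obtain ⟨m, rfl⟩ := hdvd
      have hm : 1 ≤ m := by
        rcases Nat.eq_zero_or_pos m with rfl | h
        · omega
        · exact h
      obtain ⟨m', rfl⟩ : ∃ m', m = m' + 1 := ⟨m - 1, by omega⟩
      have e1 : r * (m' + 1) - r = r * m' := by ring_nf; omega
      have e2 : r ∣ r * (m' + 1) := Dvd.intro _ rfl
      have e3 : r ∣ r * m' := Dvd.intro _ rfl
      rw [e1, if_pos e2, if_pos e3,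
        Nat.mul_div_cancel_left _ (by omega : 0 < r),
        Nat.mul_div_cancel_left _ (by omega : 0 < r)]
      have e4 : q ^ (r * (m' + 1)) = (q ^ r) ^ (m' + 1) := by rw [pow_mul]
      have e5 : q ^ (r * m') = (q ^ r) ^ m' := by rw [pow_mul]
      rw [e4, e5]
      linear_combination qp_ratio_rec hqr (a ^ r) m'
    · have hdvd' : ¬ r ∣ (n - r) := fun h => hdvd (by
        have hnn : n = (n - r) + r := by omega
        rw [hnn]; exact Nat.dvd_add h dvd_rfl)
      rw [if_neg hdvd, if_neg hdvd']
      ring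
  · rw [if_neg hrn, if_neg hrn]
    rcases Nat.eq_zero_or_pos n with rfl | hn
    · simp
    · have hnd : ¬ r ∣ n := fun h => hrn (Nat.le_of_dvd hn h)
      rw [if_neg hnd]
      ring

lemma coeff_H (q a : ℂ) (r n : ℕ) :
    coeff n (∏ i : Fin r, rescale (zeta r ^ (i.1+1)) (Fps q a))
      = ∑ k ∈ Finset.Nat.antidiagonalTuple r n,
        (∏ i : Fin r, qp q a (k i) / qp q q (k i)) * zeta r ^ (∑ i : Fin r, (i.1 + 1) * k i) := by
  rw [coeff_prod]
  refine Finset.sum_nbij' (i := fun l => (l : Fin r → ℕ))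
    (j := fun f => Finsupp.equivFunOnFinite.symm f) ?_ ?_ ?_ ?_ ?_
  · intro l hl
    rw [Finset.mem_finsuppAntidiag] at hl
    rw [Finset.Nat.mem_antidiagonalTuple]
    exact hl.1
  · intro f hf
    rw [Finset.Nat.mem_antidiagonalTuple] at hf
    rw [Finset.mem_finsuppAntidiag]
    constructor
    · simpa using hf
    · exact Finset.subset_univ _
  · intro l _; simp
  · intro f _; exact Finsupp.equivFunOnFinite.apply_symm_apply f
  · intro l _
    simp only [coeff_rescale, Fps, coeff_mk]
    rw [Finset.prod_mul_distrib,
      Finset.prod_congr rfl (fun (i : Fin r) _ => (pow_mul (zeta r) (i.1+1) (l i)).symm),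
      Finset.prod_pow_eq_pow_sum]
    ring

lemma rescale_C' (c b : ℂ) : rescale c (C b) = C b := by
  ext n
  rw [coeff_rescale]
  cases n with
  | zero => simp
  | succ k => simp [coeff_C]

lemma Heq {q a : ℂ} (hq : ‖q‖ < 1) {r : ℕ} (hr : 1 ≤ r) :
    (1 - X ^ r) * (∏ i : Fin r, rescale (zeta r ^ (i.1+1)) (Fps q a))
      = (1 - C (a ^ r) * X ^ r) * rescale q (∏ i : Fin r, rescale (zeta r ^ (i.1+1)) (Fps q a)) := by
  have h1 : ∀ i : Fin r,
      (1 - C (1 * zeta r ^ (i.1+1)) * X) * rescale (zeta r ^ (i.1+1)) (Fps q a)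
      = (1 - C (a * zeta r ^ (i.1+1)) * X) * rescale q (rescale (zeta r ^ (i.1+1)) (Fps q a)) := by
    intro i
    have h := congrArg (rescale (zeta r ^ (i.1+1))) (funcEq hq a)
    rw [map_mul, map_mul, map_sub, map_sub, map_one, map_mul, rescale_X, rescale_C',
      rescale_rescale] at h
    rw [one_mul]
    rw [rescale_rescale, mul_comm (zeta r ^ (i.1+1)) q] at *
    convert h using 3
    rw [map_mul C]
    ring
  calc (1 - X ^ r) * (∏ i : Fin r, rescale (zeta r ^ (i.1+1)) (Fps q a))
      = ∏ i : Fin r, ((1 - C (1 * zeta r ^ (i.1+1)) * X) * rescale (zeta r ^ (i.1+1)) (Fps q a)) := by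
        rw [Finset.prod_mul_distrib, prod_ps hr 1, one_pow, map_one, one_mul]
    _ = ∏ i : Fin r, ((1 - C (a * zeta r ^ (i.1+1)) * X) * rescale q (rescale (zeta r ^ (i.1+1)) (Fps q a))) :=
        Finset.prod_congr rfl fun i _ => h1 i
    _ = (1 - C (a ^ r) * X ^ r) * rescale q (∏ i : Fin r, rescale (zeta r ^ (i.1+1)) (Fps q a)) := by
        rw [Finset.prod_mul_distrib, prod_ps hr a, map_prod]

end Aux

theorem stmt2 (q a : ℂ) (hq : ‖q‖ < 1) (r n : ℕ) (hr : 2 ≤ r) :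
    ∑ k ∈ Finset.Nat.antidiagonalTuple r n,
        (∏ i : Fin r, qp q a (k i) / qp q q (k i)) * zeta r ^ (∑ i : Fin r, (i.1 + 1) * k i)
      = if r ∣ n then qp (q ^ r) (a ^ r) (n / r) / qp (q ^ r) (q ^ r) (n / r) else 0 := by
  have hr1 : 1 ≤ r := by omega
  set H := ∏ i : Fin r, rescale (zeta r ^ (i.1+1)) (Fps q a) with hH
  have h0H : coeff 0 H = 1 := by
    rw [hH, coeff_H, Finset.Nat.antidiagonalTuple_zero_right, Finset.sum_singleton]
    simp [qp]
  have h0K : coeff 0 (Kps q a r) = 1 := by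
    simp [Kps, qp]
  have hsub : (1 - X ^ r) * (H - Kps q a r)
      = (1 - C (a ^ r) * X ^ r) * rescale q (H - Kps q a r) := by
    rw [mul_sub, map_sub, mul_sub, Heq hq hr1, Keq hq hr1]
  have hzero : H - Kps q a r = 0 := by
    apply uniq hq hr1 _ hsub
    rw [map_sub, h0H, h0K, sub_self]
  have hHK : H = Kps q a r := sub_eq_zero.mp hzero
  have := congrArg (coeff n) hHK
  rw [hH, coeff_H] at this
  rw [this, Kps]
  simp only [coeff_mk]
end

section
/- For |q| < 1, ρ = e^{2πi/3}, a complex, and nonnegative integer n: the sum over triples (j,k,ℓ) of nonnegative integers with j + k + ℓ = n of (a;q)_j (a;q)_k (a;q)_ℓ ρ^{k+2ℓ} / ((q;q)_j (q;q)_k (q;q)_ℓ) equals 0 if 3 does not divide n, and equals (a^3; q^3)_m / (q^3; q^3)_m if n = 3m. -/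
open Finset Filter

namespace Stmt4Aux
open PowerSeries

lemma qpow_ne_one {q : ℂ} (hq : ‖q‖ < 1) {m : ℕ} (hm : m ≠ 0) : q ^ m ≠ 1 := by
  intro h
  have : ‖q ^ m‖ < 1 := by
    rw [norm_pow]
    exact pow_lt_one₀ (norm_nonneg q) hq hm
  rw [h] at this; simp at this

lemma qpq_ne {q : ℂ} (hq : ‖q‖ < 1) (n : ℕ) : qp q q n ≠ 0 := by
  unfold qp
  rw [Finset.prod_ne_zero_iff]
  intro j _ h
  have h1 : q * q ^ j = 1 := (sub_eq_zero.mp h).symm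
  have := qpow_ne_one hq (m := j + 1) (by omega)
  rw [pow_succ'] at this
  exact this h1

lemma zeta3_pow : zeta 3 ^ 3 = 1 := by
  have := Complex.isPrimitiveRoot_exp 3 (by norm_num)
  have h : zeta 3 = Complex.exp (2 * Real.pi * Complex.I / (3:ℕ)) := by
    unfold zeta; norm_num
  rw [h]
  exact this.pow_eq_one

lemma zeta3_sum : 1 + zeta 3 + zeta 3 ^ 2 = 0 := by
  have hprim := Complex.isPrimitiveRoot_exp 3 (by norm_num)
  have h : zeta 3 = Complex.exp (2 * Real.pi * Complex.I / (3:ℕ)) := by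
    unfold zeta; norm_num
  have hne : zeta 3 ≠ 1 := by rw [h]; exact hprim.ne_one (by norm_num)
  have h0 : (zeta 3 - 1) * (1 + zeta 3 + zeta 3 ^ 2) = 0 := by
    linear_combination zeta3_pow
  rcases mul_eq_zero.mp h0 with h' | h'
  · exact absurd (sub_eq_zero.mp h') hne
  · exact h'


noncomputable def c (q a : ℂ) (n : ℕ) : ℂ := qp q a n / qp q q n

noncomputable def A (q a b : ℂ) : PowerSeries ℂ := PowerSeries.mk fun n => c q a n * b ^ n

lemma c_rec (q a : ℂ) (hq : ‖q‖ < 1) (n : ℕ) :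
    (1 - q ^ (n + 1)) * c q a (n + 1) = (1 - a * q ^ n) * c q a n := by
  have h1 : qp q q n ≠ 0 := qpq_ne hq n
  have h2 : (1 : ℂ) - q ^ (n + 1) ≠ 0 := sub_ne_zero.mpr (Ne.symm (qpow_ne_one hq (by omega)))
  have hqq : q * q ^ n = q ^ (n + 1) := (pow_succ' q n).symm
  have e1 : qp q a (n + 1) = qp q a n * (1 - a * q ^ n) := Finset.prod_range_succ _ n
  have e2 : qp q q (n + 1) = qp q q n * (1 - q ^ (n + 1)) := by
    unfold qp; rw [Finset.prod_range_succ, hqq]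
  unfold c
  rw [e1, e2, mul_div_assoc', mul_div_assoc', div_eq_div_iff (mul_ne_zero h1 h2) h1]
  ring

lemma key1 (q a : ℂ) (hq : ‖q‖ < 1) (b : ℂ) :
    (1 - PowerSeries.C b * PowerSeries.X) * A q a b
      = (1 - PowerSeries.C (a * b) * PowerSeries.X) * PowerSeries.rescale q (A q a b) := by
  ext n
  have e1 : ∀ (d : ℂ) (G : PowerSeries ℂ), (1 - PowerSeries.C d * PowerSeries.X) * G
      = G - PowerSeries.C d * (PowerSeries.X * G) := by intro d G; ring
  rw [e1, e1]
  rcases n with _ | n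
  · rw [map_sub, map_sub, PowerSeries.coeff_C_mul, PowerSeries.coeff_C_mul,
      PowerSeries.coeff_zero_X_mul, PowerSeries.coeff_zero_X_mul, PowerSeries.coeff_rescale]
    simp [A]
  · simp only [map_sub, PowerSeries.coeff_C_mul, PowerSeries.coeff_succ_X_mul,
      PowerSeries.coeff_rescale, PowerSeries.coeff_mk, A]
    linear_combination (b ^ (n + 1)) * c_rec q a hq n

lemma cubic (x : ℂ) (b : ℂ) (hx3 : x ^ 3 = 1) (hxs : 1 + x + x ^ 2 = 0) :
    (1 - PowerSeries.C b * PowerSeries.X) * ((1 - PowerSeries.C (b * x) * PowerSeries.X) *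
      (1 - PowerSeries.C (b * x ^ 2) * PowerSeries.X))
      = 1 - PowerSeries.C (b ^ 3) * PowerSeries.X ^ 3 := by
  have h3 : (PowerSeries.C x) ^ 3 = 1 := by rw [← map_pow, hx3, map_one]
  have hs : 1 + PowerSeries.C x + (PowerSeries.C x) ^ 2 = 0 := by
    have := congrArg (PowerSeries.C (R := ℂ)) hxs
    simpa [map_add, map_pow] using this
  simp only [map_mul, map_pow]
  set u := PowerSeries.C b * PowerSeries.X with hu
  set r := PowerSeries.C x with hr
  linear_combination (u ^ 2 - u) * hs + (u ^ 2 - u ^ 3) * h3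


noncomputable def F (q a : ℂ) : PowerSeries ℂ :=
  A q a 1 * (A q a (zeta 3) * A q a (zeta 3 ^ 2))

noncomputable def S (q a : ℂ) (n : ℕ) : ℂ := PowerSeries.coeff n (F q a)

lemma key2 (q a : ℂ) (hq : ‖q‖ < 1) :
    (1 - PowerSeries.X ^ 3) * F q a
      = (1 - PowerSeries.C (a ^ 3) * PowerSeries.X ^ 3) * PowerSeries.rescale q (F q a) := by
  have c1 := cubic (zeta 3) 1 zeta3_pow zeta3_sum
  have ca := cubic (zeta 3) a zeta3_pow zeta3_sum
  have k1 := key1 q a hq 1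
  have k2 := key1 q a hq (zeta 3)
  have k3 := key1 q a hq (zeta 3 ^ 2)
  simp only [one_mul, mul_one, map_one, one_pow] at c1 ca k1 k2 k3
  have main : ((1 - PowerSeries.X) * ((1 - PowerSeries.C (zeta 3) * PowerSeries.X) *
        (1 - PowerSeries.C (zeta 3 ^ 2) * PowerSeries.X))) * F q a
      = ((1 - PowerSeries.C a * PowerSeries.X) *
          ((1 - PowerSeries.C (a * zeta 3) * PowerSeries.X) *
            (1 - PowerSeries.C (a * zeta 3 ^ 2) * PowerSeries.X)))
          * PowerSeries.rescale q (F q a) := by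
    have hres : PowerSeries.rescale q (A q a 1 * (A q a (zeta 3) * A q a (zeta 3 ^ 2)))
        = PowerSeries.rescale q (A q a 1) * (PowerSeries.rescale q (A q a (zeta 3)) *
            PowerSeries.rescale q (A q a (zeta 3 ^ 2))) := by
      simp [map_mul]
    rw [F, hres]
    have hre : ∀ p1 p2 p3 g1 g2 g3 : PowerSeries ℂ,
        (p1 * (p2 * p3)) * (g1 * (g2 * g3)) = (p1 * g1) * ((p2 * g2) * (p3 * g3)) := by
      intros; ring
    rw [hre, hre, k1, k2, k3]
  rwa [c1, ca] at main

lemma S0 (q a : ℂ) : S q a 0 = 1 := by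
  simp [S, F, A, c, qp, PowerSeries.coeff_zero_eq_constantCoeff, map_mul]

lemma Srec (q a : ℂ) (hq : ‖q‖ < 1) (n : ℕ) :
    (1 - q ^ (n + 3)) * S q a (n + 3) = (1 - a ^ 3 * q ^ n) * S q a n := by
  have h := congrArg (PowerSeries.coeff (n + 3)) (key2 q a hq)
  simp only [sub_mul, one_mul, mul_assoc, map_sub, PowerSeries.coeff_C_mul,
    PowerSeries.coeff_X_pow_mul, PowerSeries.coeff_rescale] at h
  simp only [S]
  linear_combination h

lemma S1 (q a : ℂ) (hq : ‖q‖ < 1) : S q a 1 = 0 := by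
  have h := congrArg (PowerSeries.coeff 1) (key2 q a hq)
  simp only [sub_mul, one_mul, mul_assoc, map_sub, PowerSeries.coeff_C_mul,
    PowerSeries.coeff_X_pow_mul', PowerSeries.coeff_rescale] at h
  norm_num at h
  have h2 : (1 - q) * S q a 1 = 0 := by simp only [S]; linear_combination h
  rcases mul_eq_zero.mp h2 with h' | h'
  · exact absurd (by linear_combination -h' : q ^ 1 = 1) (qpow_ne_one hq one_ne_zero)
  · exact h'

lemma S2 (q a : ℂ) (hq : ‖q‖ < 1) : S q a 2 = 0 := by
  have h := congrArg (PowerSeries.coeff 2) (key2 q a hq)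
  simp only [sub_mul, one_mul, mul_assoc, map_sub, PowerSeries.coeff_C_mul,
    PowerSeries.coeff_X_pow_mul', PowerSeries.coeff_rescale] at h
  norm_num at h
  have h2 : (1 - q ^ 2) * S q a 2 = 0 := by simp only [S]; linear_combination h
  rcases mul_eq_zero.mp h2 with h' | h'
  · exact absurd (by linear_combination -h' : q ^ 2 = 1) (qpow_ne_one hq two_ne_zero)
  · exact h'


lemma hq3 {q : ℂ} (hq : ‖q‖ < 1) : ‖q ^ 3‖ < 1 := by
  rw [norm_pow]; exact pow_lt_one₀ (norm_nonneg q) hq (by norm_num)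

lemma one_sub_qpow_ne {q : ℂ} (hq : ‖q‖ < 1) {m : ℕ} (hm : m ≠ 0) : (1 : ℂ) - q ^ m ≠ 0 :=
  sub_ne_zero.mpr (Ne.symm (qpow_ne_one hq hm))

lemma S_not_div (q a : ℂ) (hq : ‖q‖ < 1) (r : ℕ) (hr : r = 1 ∨ r = 2) (m : ℕ) :
    S q a (3 * m + r) = 0 := by
  induction m with
  | zero =>
    rcases hr with h | h <;> subst h
    · simpa using S1 q a hq
    · simpa using S2 q a hq
  | succ k ih =>
    have hrec := Srec q a hq (3 * k + r)
    rw [ih, mul_zero] at hrec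
    have hne : (1 : ℂ) - q ^ (3 * k + r + 3) ≠ 0 := one_sub_qpow_ne hq (by omega)
    have : S q a (3 * k + r + 3) = 0 := by
      rcases mul_eq_zero.mp hrec with h' | h'
      · exact absurd h' hne
      · exact h'
    have he : 3 * (k + 1) + r = 3 * k + r + 3 := by ring
    rw [he]
    exact this

lemma S_div (q a : ℂ) (hq : ‖q‖ < 1) (m : ℕ) :
    S q a (3 * m) = qp (q ^ 3) (a ^ 3) m / qp (q ^ 3) (q ^ 3) m := by
  induction m with
  | zero => simp [S0, qp]
  | succ k ih =>
    have hQ : qp (q ^ 3) (q ^ 3) k ≠ 0 := qpq_ne (hq3 hq) k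
    have h3 : (1 : ℂ) - q ^ (3 * k + 3) ≠ 0 := one_sub_qpow_ne hq (by omega)
    have e1 : qp (q ^ 3) (a ^ 3) (k + 1) = qp (q ^ 3) (a ^ 3) k * (1 - a ^ 3 * q ^ (3 * k)) := by
      have h := Finset.prod_range_succ (fun j => (1 - a ^ 3 * (q ^ 3) ^ j)) k
      rw [← pow_mul] at h
      exact h
    have e2 : qp (q ^ 3) (q ^ 3) (k + 1) = qp (q ^ 3) (q ^ 3) k * (1 - q ^ (3 * k + 3)) := by
      have h := Finset.prod_range_succ (fun j => (1 - q ^ 3 * (q ^ 3) ^ j)) k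
      rw [← pow_mul, ← pow_add] at h
      rw [show 3 + 3 * k = 3 * k + 3 by ring] at h
      exact h
    have hrec := Srec q a hq (3 * k)
    rw [ih] at hrec
    have he : 3 * (k + 1) = 3 * k + 3 := by ring
    rw [he, e1, e2, eq_div_iff (mul_ne_zero hQ h3)]
    field_simp at hrec
    linear_combination hrec


lemma tuple_sum (f g h : ℕ → ℂ) (n : ℕ) :
    ∑ x ∈ Finset.Nat.antidiagonalTuple 3 n, f (x 0) * (g (x 1) * h (x 2))
      = ∑ p ∈ Finset.HasAntidiagonal.antidiagonal n, f p.1 * ∑ r ∈ Finset.HasAntidiagonal.antidiagonal p.2, g r.1 * h r.2 := by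
  rw [eq_comm]
  simp_rw [Finset.mul_sum]
  rw [Finset.sum_sigma']
  refine Finset.sum_nbij' (fun s => ![s.1.1, s.2.1, s.2.2])
    (fun x => ⟨(x 0, x 1 + x 2), (x 1, x 2)⟩) ?_ ?_ ?_ ?_ ?_
  · rintro ⟨⟨p1, p2⟩, r1, r2⟩ hs
    simp only [Finset.mem_sigma, Finset.HasAntidiagonal.mem_antidiagonal] at hs
    simp only [Finset.Nat.mem_antidiagonalTuple, Fin.sum_univ_three, Matrix.cons_val_zero,
      Matrix.cons_val_one, Matrix.head_cons, Matrix.cons_val_two, Matrix.tail_cons]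
    omega
  · intro x hx
    simp only [Finset.Nat.mem_antidiagonalTuple, Fin.sum_univ_three, Fin.isValue] at hx
    simp only [Finset.mem_sigma, Finset.HasAntidiagonal.mem_antidiagonal, Fin.isValue]
    exact ⟨by omega, trivial⟩
  · rintro ⟨⟨p1, p2⟩, r1, r2⟩ hs
    simp only [Finset.mem_sigma, Finset.HasAntidiagonal.mem_antidiagonal] at hs
    simp only [Matrix.cons_val_zero, Matrix.cons_val_one, Matrix.head_cons,
      Matrix.cons_val_two, Matrix.tail_cons]
    rw [hs.2]
  · intro x hx
    funext i
    fin_cases i <;> simp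
  · intro s hs
    simp

lemma S_eq_sum (q a : ℂ) (n : ℕ) :
    S q a n = ∑ x ∈ Finset.Nat.antidiagonalTuple 3 n,
      c q a (x 0) * ((c q a (x 1) * zeta 3 ^ (x 1)) * (c q a (x 2) * (zeta 3 ^ 2) ^ (x 2))) := by
  rw [tuple_sum (fun k => c q a k) (fun k => c q a k * zeta 3 ^ k)
    (fun k => c q a k * (zeta 3 ^ 2) ^ k) n]
  rw [S, F, PowerSeries.coeff_mul]
  refine Finset.sum_congr rfl fun p hp => ?_
  rw [PowerSeries.coeff_mul]
  simp [A, Finset.mul_sum]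

end Stmt4Aux

theorem stmt4 (q a : ℂ) (hq : ‖q‖ < 1) (n : ℕ) :
    ∑ k ∈ Finset.Nat.antidiagonalTuple 3 n,
        qp q a (k 0) * qp q a (k 1) * qp q a (k 2) * zeta 3 ^ (k 1 + 2 * k 2)
          / (qp q q (k 0) * qp q q (k 1) * qp q q (k 2))
      = if 3 ∣ n then qp (q ^ 3) (a ^ 3) (n / 3) / qp (q ^ 3) (q ^ 3) (n / 3) else 0 := by
  have hsum : ∑ k ∈ Finset.Nat.antidiagonalTuple 3 n,
        qp q a (k 0) * qp q a (k 1) * qp q a (k 2) * zeta 3 ^ (k 1 + 2 * k 2)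
          / (qp q q (k 0) * qp q q (k 1) * qp q q (k 2)) = Stmt4Aux.S q a n := by
    rw [Stmt4Aux.S_eq_sum]
    refine Finset.sum_congr rfl fun x hx => ?_
    unfold Stmt4Aux.c
    rw [pow_add, pow_mul]
    ring
  rw [hsum]
  by_cases h : 3 ∣ n
  · rw [if_pos h]
    have hd := Stmt4Aux.S_div q a hq (n / 3)
    rw [Nat.mul_div_cancel' h] at hd
    exact hd
  · rw [if_neg h]
    have hr : n % 3 = 1 ∨ n % 3 = 2 := by omega
    have hres := Stmt4Aux.S_not_div q a hq (n % 3) hr (n / 3)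
    rw [show 3 * (n / 3) + n % 3 = n from by omega] at hres
    exact hres
end

section
/- For |q| < 1, |b/a| < |z| < 1 (with a ≠ 0), and integer r ≥ 2: the product over i = 0, ..., r-1 of (q, b/a, a ζ_r^i z, q ζ_r^{-i}/(az); q)_∞ / (b, q/a, ζ_r^i z, b ζ_r^{-i}/(az); q)_∞ equals [(q, b/a; q)_∞^r / (b, q/a; q)_∞^r] · (a^r z^r, q^r a^{-r} z^{-r}; q^r)_∞ / (z^r, b^r a^{-r} z^{-r}; q^r)_∞, where ζ_r = e^{2πi/r} and (x_1, ..., x_s; q)_∞ denotes the product of (x_j; q)_∞. -/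
open Finset Filter

lemma my_mult (q x : ℂ) (hq : ‖q‖ < 1) : Multipliable fun j : ℕ => 1 - x * q ^ j := by
  by_cases h0 : ∃ j, 1 - x * q ^ j = 0
  · obtain ⟨j0, hj0⟩ := h0
    refine ⟨0, ?_⟩
    rw [HasProd]
    have hev : ∀ᶠ s : Finset ℕ in atTop, (0 : ℂ) = ∏ i ∈ s, (1 - x * q ^ i) := by
      filter_upwards [Filter.eventually_ge_atTop ({j0} : Finset ℕ)] with s hs
      exact (Finset.prod_eq_zero (hs (Finset.mem_singleton_self j0)) hj0).symm
    exact Filter.Tendsto.congr' hev tendsto_const_nhds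
  · push_neg at h0
    refine Complex.multipliable_of_summable_log ?_
    have hgeo : Summable (fun j : ℕ => 3 / 2 * ‖x‖ * ‖q‖ ^ j) :=
      (summable_geometric_of_lt_one (norm_nonneg q) hq).mul_left _
    refine Summable.of_norm_bounded_eventually_nat hgeo ?_
    have htend : Filter.Tendsto (fun j : ℕ => x * q ^ j) atTop (nhds 0) := by
      simpa using (tendsto_pow_atTop_nhds_zero_of_norm_lt_one hq).const_mul x
    have hsmall : ∀ᶠ j : ℕ in atTop, ‖x * q ^ j‖ ≤ 1 / 2 := by
      have := htend.norm
      simp only [norm_zero] at this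
      exact this.eventually_le_const (by norm_num)
    filter_upwards [hsmall] with j hj
    have h1 : ‖Complex.log (1 + -(x * q ^ j))‖ ≤ 3 / 2 * ‖-(x * q ^ j)‖ :=
      Complex.norm_log_one_add_half_le_self (by simpa using hj)
    simp only [norm_neg] at h1
    calc ‖Complex.log (1 - x * q ^ j)‖ = ‖Complex.log (1 + -(x * q ^ j))‖ := by ring_nf
      _ ≤ 3 / 2 * ‖x * q ^ j‖ := h1
      _ = 3 / 2 * ‖x‖ * ‖q‖ ^ j := by rw [norm_mul, norm_pow]; ring

lemma my_mult_prod {ι : Type*} (s : Finset ι) (f : ι → ℕ → ℂ)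
    (h : ∀ i ∈ s, Multipliable (f i)) :
    Multipliable (fun j => ∏ i ∈ s, f i j) := by
  induction s using Finset.cons_induction with
  | empty => simpa using multipliable_one
  | cons i s hi ih =>
    simp only [Finset.prod_cons]
    exact (h i (Finset.mem_cons_self i s)).mul
      (ih fun i hi => h i (Finset.mem_cons_of_mem hi))

lemma my_prod_tprod {ι : Type*} (s : Finset ι) (f : ι → ℕ → ℂ)
    (h : ∀ i ∈ s, Multipliable (f i)) :
    ∏ i ∈ s, (∏' j, f i j) = ∏' j, ∏ i ∈ s, f i j := by
  induction s using Finset.cons_induction with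
  | empty => simp
  | cons i s hi ih =>
    rw [Finset.prod_cons,
      ih (fun i hi => h i (Finset.mem_cons_of_mem hi)),
      ← Multipliable.tprod_mul (h i (Finset.mem_cons_self i s))
        (my_mult_prod s f (fun i hi => h i (Finset.mem_cons_of_mem hi)))]
    exact tprod_congr fun j => by rw [Finset.prod_cons]

lemma my_prod_one_sub {r : ℕ} (hr : 0 < r) {μ : ℂ} (hμ : IsPrimitiveRoot μ r) (c : ℂ) :
    ∏ i ∈ Finset.range r, (1 - c * μ ^ i) = 1 - c ^ r := by
  rcases eq_or_ne c 0 with rfl | hc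
  · simp [zero_pow hr.ne']
  · have h := congrArg (Polynomial.eval c⁻¹)
      (X_pow_sub_C_eq_prod hμ hr (one_pow r))
    simp only [Polynomial.eval_sub, Polynomial.eval_pow, Polynomial.eval_X, Polynomial.eval_C,
      Polynomial.eval_prod, Polynomial.eval_mul, Polynomial.eval_one, mul_one] at h
    calc ∏ i ∈ Finset.range r, (1 - c * μ ^ i)
        = ∏ i ∈ Finset.range r, (c * (c⁻¹ - μ ^ i)) := by
          refine Finset.prod_congr rfl fun i _ => ?_
          rw [mul_sub, mul_inv_cancel₀ hc]
      _ = c ^ r * ∏ i ∈ Finset.range r, (c⁻¹ - μ ^ i) := by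
          rw [Finset.prod_mul_distrib, Finset.prod_const, Finset.card_range]
      _ = c ^ r * (c⁻¹ ^ r - 1) := by rw [← h]
      _ = 1 - c ^ r := by
          rw [mul_sub, ← mul_pow, mul_inv_cancel₀ hc, one_pow, mul_one]

lemma my_key (q c μ : ℂ) (hq : ‖q‖ < 1) {r : ℕ} (hr : 0 < r) (hμ : IsPrimitiveRoot μ r) :
    ∏ i ∈ Finset.range r, qpInf q (c * μ ^ i) = qpInf (q ^ r) (c ^ r) := by
  unfold qpInf
  rw [my_prod_tprod _ _ (fun i _ => my_mult q (c * μ ^ i) hq)]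
  refine tprod_congr fun j => ?_
  calc ∏ i ∈ Finset.range r, (1 - c * μ ^ i * q ^ j)
      = ∏ i ∈ Finset.range r, (1 - (c * q ^ j) * μ ^ i) := by
        refine Finset.prod_congr rfl fun i _ => ?_; ring_nf
    _ = 1 - (c * q ^ j) ^ r := my_prod_one_sub hr hμ _
    _ = 1 - c ^ r * (q ^ r) ^ j := by rw [mul_pow, ← pow_mul, ← pow_mul, Nat.mul_comm]

theorem stmt5 (q a b z : ℂ) (hq : ‖q‖ < 1) (ha : a ≠ 0)
    (hbz : ‖b / a‖ < ‖z‖) (hz : ‖z‖ < 1) (r : ℕ) (hr : 2 ≤ r) :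
    ∏ i ∈ Finset.range r,
        (qpInf q q * qpInf q (b / a) * qpInf q (a * zeta r ^ i * z)
            * qpInf q (q * zeta r ^ (-(i : ℤ)) / (a * z)))
          / (qpInf q b * qpInf q (q / a) * qpInf q (zeta r ^ i * z)
            * qpInf q (b * zeta r ^ (-(i : ℤ)) / (a * z)))
      = (qpInf q q * qpInf q (b / a)) ^ r / (qpInf q b * qpInf q (q / a)) ^ r
          * (qpInf (q ^ r) (a ^ r * z ^ r) * qpInf (q ^ r) (q ^ r * a⁻¹ ^ r * z⁻¹ ^ r))
          / (qpInf (q ^ r) (z ^ r) * qpInf (q ^ r) (b ^ r * a⁻¹ ^ r * z⁻¹ ^ r)) := by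
  have hr0 : 0 < r := lt_of_lt_of_le two_pos hr
  have hrne : (r : ℕ) ≠ 0 := hr0.ne'
  have hμ : IsPrimitiveRoot (zeta r) r := by
    have := Complex.isPrimitiveRoot_exp r hrne
    simpa [zeta] using this
  have hμinv : IsPrimitiveRoot (zeta r)⁻¹ r := hμ.inv
  have hzinv : ∀ i : ℕ, zeta r ^ (-(i : ℤ)) = (zeta r)⁻¹ ^ i := by
    intro i
    rw [zpow_neg, zpow_natCast, inv_pow]
  -- rewrite each factor's arguments into the `c * μ ^ i` shape
  have hstep : ∀ i ∈ Finset.range r,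
      (qpInf q q * qpInf q (b / a) * qpInf q (a * zeta r ^ i * z)
            * qpInf q (q * zeta r ^ (-(i : ℤ)) / (a * z)))
          / (qpInf q b * qpInf q (q / a) * qpInf q (zeta r ^ i * z)
            * qpInf q (b * zeta r ^ (-(i : ℤ)) / (a * z)))
      = (qpInf q q * qpInf q (b / a) * qpInf q ((a * z) * zeta r ^ i)
            * qpInf q ((q / (a * z)) * ((zeta r)⁻¹) ^ i))
          / (qpInf q b * qpInf q (q / a) * qpInf q (z * zeta r ^ i)
            * qpInf q ((b / (a * z)) * ((zeta r)⁻¹) ^ i)) := by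
    intro i _
    rw [hzinv i,
      show a * zeta r ^ i * z = (a * z) * zeta r ^ i from by ring,
      show q * (zeta r)⁻¹ ^ i / (a * z) = (q / (a * z)) * ((zeta r)⁻¹) ^ i from by ring,
      show zeta r ^ i * z = z * zeta r ^ i from mul_comm _ _,
      show b * (zeta r)⁻¹ ^ i / (a * z) = (b / (a * z)) * ((zeta r)⁻¹) ^ i from by ring]
  rw [Finset.prod_congr rfl hstep]
  simp only [Finset.prod_div_distrib, Finset.prod_mul_distrib, Finset.prod_const,
    Finset.card_range]
  rw [my_key q (a * z) (zeta r) hq hr0 hμ,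
    my_key q (q / (a * z)) ((zeta r)⁻¹) hq hr0 hμinv,
    my_key q z (zeta r) hq hr0 hμ,
    my_key q (b / (a * z)) ((zeta r)⁻¹) hq hr0 hμinv]
  have e1 : (a * z) ^ r = a ^ r * z ^ r := mul_pow a z r
  have e2 : (q / (a * z)) ^ r = q ^ r * a⁻¹ ^ r * z⁻¹ ^ r := by
    rw [div_pow, div_eq_mul_inv, ← inv_pow, mul_inv, mul_pow]; ring
  have e3 : (b / (a * z)) ^ r = b ^ r * a⁻¹ ^ r * z⁻¹ ^ r := by
    rw [div_pow, div_eq_mul_inv, ← inv_pow, mul_inv, mul_pow]; ring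
  rw [e1, e2, e3]
  field_simp
  ring
end
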